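/- For the planar heat kernel $p_t$, for all $s,t>0$ and $a,b\in\mathbb{R}^2$: $\int_{\mathbb{R}^2}\Big(\frac{p_s(y,b)}{p_{s+t}(a,b)}-1\Big)^2 p_t(a,y)\,dy \;=\; \frac{s+t}{s}\cdot\frac{p_{s/2+t}(a,b)}{p_{(s+t)/2}(a,b)} \;-\;1$. -/

import Mathlib

open Real MeasureTheory

open scoped RealInnerProductSpace

lemma key_integrable (B : ℝ) (hB : 0 < B) (c : ℝ) (w : EuclideanSpace ℝ (Fin 2)) :
    Integrable (fun v : EuclideanSpace ℝ (Fin 2) ↦ rexp (-B * ‖v‖ ^ 2 + c * ⟪w, v⟫)) := by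
  have h := GaussianFourier.integrable_cexp_neg_mul_sq_norm_add (V := EuclideanSpace ℝ (Fin 2))
    (b := (B : ℂ)) (by simpa using hB) (c : ℂ) w
  have h2 : Integrable (fun v : EuclideanSpace ℝ (Fin 2) ↦
      Complex.exp ((-B * ‖v‖ ^ 2 + c * ⟪w, v⟫ : ℝ) : ℂ)) := by
    convert h using 2 with v
    push_cast
    ring
  simpa only [← Complex.ofReal_exp, RCLike.re_to_complex, Complex.ofReal_re] using h2.re

lemma key_integral (B : ℝ) (hB : 0 < B) (c : ℝ) (w : EuclideanSpace ℝ (Fin 2)) :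
    ∫ v : EuclideanSpace ℝ (Fin 2), rexp (-B * ‖v‖ ^ 2 + c * ⟪w, v⟫) =
      π / B * rexp (c ^ 2 * ‖w‖ ^ 2 / (4 * B)) := by
  have h := GaussianFourier.integral_cexp_neg_mul_sq_norm_add (V := EuclideanSpace ℝ (Fin 2))
    (b := (B : ℂ)) (by simpa using hB) (c : ℂ) w
  have h2 : (fun v : EuclideanSpace ℝ (Fin 2) ↦
        Complex.exp (-(B : ℂ) * ‖v‖ ^ 2 + (c : ℂ) * ⟪w, v⟫))
      = fun v ↦ ((rexp (-B * ‖v‖ ^ 2 + c * ⟪w, v⟫) : ℝ) : ℂ) := by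
    funext v
    rw [Complex.ofReal_exp]
    push_cast
    ring_nf
  have hrank : ((Module.finrank ℝ (EuclideanSpace ℝ (Fin 2)) : ℂ) / 2) = 1 := by
    simp [finrank_euclideanSpace]
  rw [h2, hrank, Complex.cpow_one] at h
  have h4 : ((π / B * rexp (c ^ 2 * ‖w‖ ^ 2 / (4 * B)) : ℝ) : ℂ)
      = (π : ℂ) / B * Complex.exp ((c : ℂ) ^ 2 * (‖w‖ : ℂ) ^ 2 / (4 * B)) := by
    rw [Complex.ofReal_mul, Complex.ofReal_exp]
    push_cast
    ring_nf
  rw [← h4] at h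
  rw [← Complex.ofReal_inj]
  rw [← h]
  exact (integral_ofReal (𝕜 := ℂ)).symm

lemma mulexp (C D c d : ℝ) : C * rexp c * (D * rexp d) = (C * D) * rexp (c + d) := by
  rw [Real.exp_add]; ring

lemma mulexp2 (C c d : ℝ) : C * rexp c * rexp d = C * rexp (c + d) := by
  rw [Real.exp_add]; ring

noncomputable def heatKernel (t : ℝ) (x y : EuclideanSpace ℝ (Fin 2)) : ℝ :=
  (2 * Real.pi * t)⁻¹ * Real.exp (-‖y - x‖ ^ 2 / (2 * t))

lemma heat_repr (t : ℝ) (ht : 0 < t) (a : EuclideanSpace ℝ (Fin 2)) :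
    (fun y : EuclideanSpace ℝ (Fin 2) ↦ heatKernel t a y) =
      fun y ↦ ((2 * π * t)⁻¹ * rexp (-(‖a‖ ^ 2 / (2 * t)))) *
        rexp (-(1 / (2 * t)) * ‖y‖ ^ 2 + (1 / t) * ⟪a, y⟫) := by
  funext y
  rw [heatKernel, mulexp2]
  congr 1
  rw [norm_sub_sq_real, real_inner_comm]
  field_simp
  ring

lemma heat_prod_repr (u t : ℝ) (hu : 0 < u) (ht : 0 < t) (a b : EuclideanSpace ℝ (Fin 2)) :
    (fun y : EuclideanSpace ℝ (Fin 2) ↦ heatKernel u y b * heatKernel t a y) =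
      fun y ↦ ((2 * π * u)⁻¹ * (2 * π * t)⁻¹ *
          rexp (-(‖b‖ ^ 2 / (2 * u) + ‖a‖ ^ 2 / (2 * t)))) *
        rexp (-((u + t) / (2 * u * t)) * ‖y‖ ^ 2 +
          1 * ⟪(1 / u) • b + (1 / t) • a, y⟫) := by
  funext y
  simp only [heatKernel]
  rw [mulexp, mulexp2]
  congr 1
  rw [norm_sub_sq_real, norm_sub_sq_real, inner_add_left, real_inner_smul_left,
    real_inner_smul_left, real_inner_comm y a]
  field_simp
  ring

lemma heat_integrable_prod (u t : ℝ) (hu : 0 < u) (ht : 0 < t)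
    (a b : EuclideanSpace ℝ (Fin 2)) :
    Integrable (fun y : EuclideanSpace ℝ (Fin 2) ↦ heatKernel u y b * heatKernel t a y) := by
  rw [heat_prod_repr u t hu ht a b]
  exact (key_integrable _ (by positivity) _ _).const_mul _

lemma heat_integrable (t : ℝ) (ht : 0 < t) (a : EuclideanSpace ℝ (Fin 2)) :
    Integrable (fun y : EuclideanSpace ℝ (Fin 2) ↦ heatKernel t a y) := by
  rw [heat_repr t ht a]
  exact (key_integrable _ (by positivity) _ _).const_mul _

lemma heat_norm_one (t : ℝ) (ht : 0 < t) (a : EuclideanSpace ℝ (Fin 2)) :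
    ∫ y : EuclideanSpace ℝ (Fin 2), heatKernel t a y = 1 := by
  have hπ := Real.pi_pos
  rw [heat_repr t ht a, integral_const_mul, key_integral _ (by positivity) _ a, mulexp]
  rw [show -(‖a‖ ^ 2 / (2 * t)) + ((1 / t) ^ 2 * ‖a‖ ^ 2 / (4 * (1 / (2 * t)))) = 0 by
    field_simp; ring]
  rw [Real.exp_zero]
  field_simp

lemma heat_ck (u t : ℝ) (hu : 0 < u) (ht : 0 < t) (a b : EuclideanSpace ℝ (Fin 2)) :
    ∫ y : EuclideanSpace ℝ (Fin 2), heatKernel u y b * heatKernel t a y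
      = heatKernel (u + t) a b := by
  have hπ := Real.pi_pos
  rw [heat_prod_repr u t hu ht a b, integral_const_mul, key_integral _ (by positivity),
    heatKernel, mulexp]
  have hw : ‖(1 / u) • b + (1 / t) • a‖ ^ 2
      = (1/u)^2 * ‖b‖^2 + 2 * ((1/u) * (1/t)) * ⟪b, a⟫ + (1/t)^2 * ‖a‖^2 := by
    rw [norm_add_sq_real, norm_smul, norm_smul, real_inner_smul_left, real_inner_smul_right]
    simp [abs_of_pos hu, abs_of_pos ht]
    ring
  have hba : ‖b - a‖ ^ 2 = ‖b‖^2 - 2 * ⟪b, a⟫ + ‖a‖^2 := norm_sub_sq_real b a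
  rw [show (-(‖b‖ ^ 2 / (2 * u) + ‖a‖ ^ 2 / (2 * t)) +
      1 ^ 2 * ‖(1 / u) • b + (1 / t) • a‖ ^ 2 / (4 * ((u + t) / (2 * u * t))))
      = -‖b - a‖ ^ 2 / (2 * (u + t)) by
    rw [hw, hba]; field_simp; ring]
  congr 1
  field_simp

lemma heat_pos (t : ℝ) (ht : 0 < t) (x y : EuclideanSpace ℝ (Fin 2)) :
    0 < heatKernel t x y := by
  have hπ := Real.pi_pos
  rw [heatKernel]
  positivity

lemma heat_sq (u : ℝ) (hu : 0 < u) (x y : EuclideanSpace ℝ (Fin 2)) :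
    heatKernel u x y ^ 2 = (4 * π * u)⁻¹ * heatKernel (u / 2) x y := by
  have hπ := Real.pi_pos
  rw [heatKernel, heatKernel, mul_pow, sq (rexp _), ← Real.exp_add]
  rw [show -‖y - x‖ ^ 2 / (2 * u) + -‖y - x‖ ^ 2 / (2 * u) = -‖y - x‖ ^ 2 / (2 * (u / 2)) by
    field_simp; ring]
  rw [show (4 * π * u)⁻¹ * ((2 * π * (u / 2))⁻¹ * rexp (-‖y - x‖ ^ 2 / (2 * (u / 2))))
      = ((4 * π * u)⁻¹ * (2 * π * (u / 2))⁻¹) * rexp (-‖y - x‖ ^ 2 / (2 * (u / 2))) by ring]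
  congr 1
  field_simp
  ring

theorem stmt9 (s t : ℝ) (hs : 0 < s) (ht : 0 < t) (a b : EuclideanSpace ℝ (Fin 2)) :
    ∫ y, (heatKernel s y b / heatKernel (s + t) a b - 1) ^ 2 * heatKernel t a y =
      (s + t) / s * (heatKernel (s / 2 + t) a b / heatKernel ((s + t) / 2) a b) - 1 := by
  have hπ := Real.pi_pos
  set P := heatKernel (s + t) a b with hP
  have hPpos : 0 < P := heat_pos _ (by linarith) a b
  have hst : (0:ℝ) < s + t := by linarith
  have I1 : Integrable (fun y : EuclideanSpace ℝ (Fin 2) ↦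
      heatKernel (s/2) y b * heatKernel t a y) := heat_integrable_prod _ _ (by linarith) ht a b
  have I2 : Integrable (fun y : EuclideanSpace ℝ (Fin 2) ↦
      heatKernel s y b * heatKernel t a y) := heat_integrable_prod _ _ hs ht a b
  have I3 : Integrable (fun y : EuclideanSpace ℝ (Fin 2) ↦ heatKernel t a y) :=
    heat_integrable t ht a
  have hrw : (fun y : EuclideanSpace ℝ (Fin 2) ↦
      (heatKernel s y b / P - 1) ^ 2 * heatKernel t a y)
      = fun y ↦ (P⁻¹ ^ 2 * (4 * π * s)⁻¹) * (heatKernel (s/2) y b * heatKernel t a y)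
        - (2 * P⁻¹) * (heatKernel s y b * heatKernel t a y) + heatKernel t a y := by
    funext y
    rw [show (heatKernel s y b / P - 1) ^ 2 * heatKernel t a y
        = P⁻¹ ^ 2 * (heatKernel s y b ^ 2 * heatKernel t a y)
          - 2 * P⁻¹ * (heatKernel s y b * heatKernel t a y) + heatKernel t a y by
      field_simp; ring]
    rw [heat_sq s hs y b]
    ring
  have I12 : Integrable (fun y : EuclideanSpace ℝ (Fin 2) ↦
      (P⁻¹ ^ 2 * (4 * π * s)⁻¹) * (heatKernel (s/2) y b * heatKernel t a y)
        - (2 * P⁻¹) * (heatKernel s y b * heatKernel t a y)) :=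
    (I1.const_mul _).sub (I2.const_mul _)
  rw [hrw, integral_add I12 I3, integral_sub (I1.const_mul _) (I2.const_mul _),
    integral_const_mul, integral_const_mul,
    heat_ck _ _ (by linarith) ht a b, heat_ck _ _ hs ht a b, heat_norm_one t ht a]
  have hsq : P ^ 2 = (4 * π * (s + t))⁻¹ * heatKernel ((s + t) / 2) a b := by
    rw [hP]; exact heat_sq (s + t) hst a b
  have hA : 0 < heatKernel (s / 2 + t) a b := heat_pos _ (by linarith) a b
  have hQ : 0 < heatKernel ((s + t) / 2) a b := heat_pos _ (by linarith) a b
  rw [show heatKernel ((s + t) / 2) a b = 4 * π * (s + t) * P ^ 2 by rw [hsq]; field_simp]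
  have hs2t : heatKernel (s / 2 + t) a b = heatKernel (s / 2 + t) a b := rfl
  field_simp
  ring
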